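/- Assume there exists an ω₂-complete normal ideal I on ω₂ containing all singletons such that I⁺ has a dense subset K closed under lower bounds of descending chains of length < ω₁ (the hypothesis I(ω)). Then the continuum hypothesis 2^ω = ω₁ holds. -/

import Mathlib

open Cardinal

noncomputable section

/-- ω₂ as an ordinal. -/
abbrev om2 : Ordinal := (Cardinal.aleph 2).ord

/-- The ordinals below ω₂, as a linearly ordered type. -/
abbrev O2 : Type 1 := {o : Ordinal // o < om2}

/-- The hypothesis `I(ω)`: there is a proper, ω₂-complete, normal ideal `I` on ω₂
containing all singletons, such that the `I`-positive sets have a dense subset `K`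
in which every descending chain of length `< ω₁` has a lower bound.  Then the
continuum hypothesis `2^ω = ω₁` holds. -/
theorem CH_of_I_omega
    (I : Set (Set O2))
    (hdown : ∀ Y Z : Set O2, Y ⊆ Z → Z ∈ I → Y ∈ I)
    (hproper : (Set.univ : Set O2) ∉ I)
    (hcomplete : ∀ S : Set (Set O2), S ⊆ I → #S < Cardinal.aleph 2 → ⋃₀ S ∈ I)
    (hnormal : ∀ A : O2 → Set O2, (∀ α, A α ∈ I) →
      {β : O2 | ∃ α : O2, α < β ∧ β ∈ A α} ∈ I)
    (hsing : ∀ x : O2, ({x} : Set O2) ∈ I)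
    (K : Set (Set O2))
    (hKpos : ∀ Y ∈ K, Y ∉ I)
    (hKdense : ∀ X : Set O2, X ∉ I → ∃ Y ∈ K, Y ⊆ X)
    (hKchain : ∀ δ : Ordinal, δ < (Cardinal.aleph 1).ord →
      ∀ c : {o : Ordinal // o < δ} → Set O2, (∀ i, c i ∈ K) →
        (∀ i j, i ≤ j → c j ⊆ c i) → ∃ Y ∈ K, ∀ i, Y ⊆ c i) :
    (2 : Cardinal.{0}) ^ (Cardinal.aleph0 : Cardinal.{0}) = Cardinal.aleph 1 := by
  -- Main step: the continuum is strictly below ℵ₂.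
  have hmain : ¬ (Cardinal.aleph 2 ≤ (2 : Cardinal.{0}) ^ (Cardinal.aleph0 : Cardinal.{0})) := by
    intro hle
    -- unions of two members of I lie in I
    have hunion2 : ∀ A B : Set O2, A ∈ I → B ∈ I → A ∪ B ∈ I := by
      intro A B hA hB
      have hS : ({A, B} : Set (Set O2)) ⊆ I := by
        intro X hX
        rcases hX with rfl | rfl
        · exact hA
        · simpa using hB
      have hcard : #({A, B} : Set (Set O2)) < Cardinal.aleph 2 := by
        have h1 : #({A, B} : Set (Set O2)) ≤ 2 := by
          have := Cardinal.mk_insert_le (s := ({B} : Set (Set O2))) (a := A)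
          simpa [Cardinal.mk_singleton, one_add_one_eq_two] using this
        have h2 : (2 : Cardinal.{1}) < Cardinal.aleph 2 := by
          have : (2 : Cardinal.{1}) < ℵ₀ := by
            have := Cardinal.nat_lt_aleph0.{1} 2
            simpa using this
          exact this.trans_le (Cardinal.aleph0_le_aleph 2)
        exact lt_of_le_of_lt h1 h2
      have := hcomplete _ hS hcard
      rwa [Set.sUnion_pair] at this
    -- an injection of `O2` into the reals (as `ℕ → Bool`)
    obtain ⟨T⟩ : Nonempty (O2 ↪ ULift.{1} (ℕ → Bool)) := by
      rw [← Cardinal.le_def]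
      have h1 : #O2 = Cardinal.lift.{1,0} (Cardinal.aleph.{0} 2) := by
        have := Ordinal.mk_Iio_ordinal om2
        have h2 : #O2 = #(Set.Iio om2) := rfl
        rw [h2, this, Cardinal.card_ord]
      have h2 : #(ULift.{1} (ℕ → Bool)) =
          Cardinal.lift.{1,0} ((2 : Cardinal.{0}) ^ (Cardinal.aleph0 : Cardinal.{0})) := by
        rw [Cardinal.mk_uLift]
        congr 1
        rw [← Cardinal.mk_bool, ← Cardinal.mk_nat, Cardinal.power_def]
      rw [h1, h2]
      exact Cardinal.lift_le.mpr hle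
    set t : O2 → ℕ → Bool := fun α => (T α).down with ht
    have htinj : Function.Injective t := by
      intro a b hab
      apply T.injective
      exact ULift.ext _ _ hab
    -- at each step we can pass to a positive fiber of the n-th bit
    have hstep : ∀ Y : Set O2, Y ∉ I → ∀ n : ℕ, ∃ b : Bool, {α ∈ Y | t α n = b} ∉ I := by
      intro Y hY n
      by_contra hcon
      push_neg at hcon
      apply hY
      have hsub : Y ⊆ {α ∈ Y | t α n = false} ∪ {α ∈ Y | t α n = true} := by
        intro α hα
        cases hb : t α n
        · exact Or.inl ⟨hα, hb⟩
        · exact Or.inr ⟨hα, hb⟩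
      exact hdown _ _ hsub (hunion2 _ _ (hcon false) (hcon true))
    -- one-step refinement inside K
    have key : ∀ (n : ℕ) (Y : Set O2), Y ∈ K →
        ∃ Z : Set O2, Z ∈ K ∧ ∃ b : Bool, Z ⊆ {α ∈ Y | t α n = b} := by
      intro n Y hY
      obtain ⟨b, hb⟩ := hstep Y (hKpos Y hY) n
      obtain ⟨Z, hZK, hZsub⟩ := hKdense _ hb
      exact ⟨Z, hZK, b, hZsub⟩
    obtain ⟨Y0, hY0K, -⟩ := hKdense Set.univ hproper
    -- the descending decision chain
    let C : ℕ → {Y : Set O2 // Y ∈ K} := fun n =>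
      Nat.rec ⟨Y0, hY0K⟩
        (fun n p => ⟨(key n p.1 p.2).choose, (key n p.1 p.2).choose_spec.1⟩) n
    let b : ℕ → Bool := fun n => (key n (C n).1 (C n).2).choose_spec.2.choose
    have hCb : ∀ n : ℕ, (C (n + 1)).1 ⊆ {α ∈ (C n).1 | t α n = b n} := fun n =>
      (key n (C n).1 (C n).2).choose_spec.2.choose_spec
    have hCsub : ∀ n : ℕ, (C (n + 1)).1 ⊆ (C n).1 := by
      intro n α hα
      exact (hCb n hα).1
    have hCmono : ∀ m n : ℕ, m ≤ n → (C n).1 ⊆ (C m).1 := by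
      intro m n hmn
      induction n with
      | zero => simp_all
      | succ k ih =>
        rcases Nat.lt_or_ge m (k + 1) with h | h
        · exact fun α hα => ih (Nat.lt_succ_iff.mp h) (hCsub k hα)
        · have : m = k + 1 := le_antisymm hmn h
          subst this
          exact fun α hα => hα
    -- apply the chain condition at length ω
    have homega : Ordinal.omega0 < (Cardinal.aleph 1).ord := by
      rw [← Cardinal.ord_aleph0]
      exact Cardinal.ord_lt_ord.mpr Cardinal.aleph0_lt_aleph_one
    let toN : {o : Ordinal // o < Ordinal.omega0} → ℕ := fun i =>
      (Ordinal.lt_omega0.mp i.2).choose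
    have htoN : ∀ i : {o : Ordinal // o < Ordinal.omega0},
        i.1 = ((toN i : ℕ) : Ordinal) := fun i =>
      (Ordinal.lt_omega0.mp i.2).choose_spec
    let c : {o : Ordinal // o < Ordinal.omega0} → Set O2 := fun i => (C (toN i)).1
    have hcK : ∀ i, c i ∈ K := fun i => (C (toN i)).2
    have hcanti : ∀ i j, i ≤ j → c j ⊆ c i := by
      intro i j hij
      have h1 : ((toN i : ℕ) : Ordinal) ≤ ((toN j : ℕ) : Ordinal) := by
        rw [← htoN i, ← htoN j]
        exact hij
      have h2 : toN i ≤ toN j := by exact_mod_cast h1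
      exact hCmono _ _ h2
    obtain ⟨Z, hZK, hZ⟩ := hKchain Ordinal.omega0 homega c hcK hcanti
    have hZC : ∀ n : ℕ, Z ⊆ (C n).1 := by
      intro n
      have hn : ((n : ℕ) : Ordinal) < Ordinal.omega0 := Ordinal.nat_lt_omega0 n
      have h4 := hZ ⟨_, hn⟩
      have heq : toN ⟨_, hn⟩ = n := by
        have h3 : ((n : ℕ) : Ordinal) = ((toN ⟨_, hn⟩ : ℕ) : Ordinal) := htoN ⟨_, hn⟩
        exact_mod_cast h3.symm
      have h5 : Z ⊆ (C (toN ⟨_, hn⟩)).1 := h4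
      rw [heq] at h5
      exact h5
    -- every element of Z has all its bits pinned down, so Z is a subsingleton
    have hpin : ∀ α ∈ Z, t α = b := by
      intro α hα
      funext n
      exact (hCb n (hZC (n + 1) hα)).2
    have hsub : Z.Subsingleton := by
      intro x hx y hy
      apply htinj
      rw [hpin x hx, hpin y hy]
    -- hence Z ∈ I, contradicting positivity of members of K
    have hO2ne : ∃ x : O2, True := by
      refine ⟨⟨0, ?_⟩, trivial⟩
      have : (0 : Ordinal) = (0 : Cardinal.{0}).ord := (Cardinal.ord_zero).symm
      rw [this]
      exact Cardinal.ord_lt_ord.mpr (Cardinal.aleph_pos 2)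
    have hZI : Z ∈ I := by
      rcases Set.eq_empty_or_nonempty Z with h | ⟨z, hz⟩
      · obtain ⟨x, -⟩ := hO2ne
        exact hdown _ _ (h ▸ Set.empty_subset {x}) (hsing x)
      · refine hdown _ {z} ?_ (hsing z)
        intro α hα
        simp [hsub hα hz]
    exact hKpos Z hZK hZI
  -- conclude `2 ^ ℵ₀ = ℵ₁`
  have hlt : (2 : Cardinal.{0}) ^ (Cardinal.aleph0 : Cardinal.{0}) < Cardinal.aleph 2 :=
    not_le.mp hmain
  have h2 : (2 : Ordinal) = Order.succ (1 : Ordinal) := by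
    rw [Order.succ_eq_add_one, one_add_one_eq_two]
  have hsucc : Cardinal.aleph 2 = Order.succ (Cardinal.aleph 1) := by
    rw [h2, Cardinal.aleph_succ]
  have hle : (2 : Cardinal.{0}) ^ (Cardinal.aleph0 : Cardinal.{0}) ≤ Cardinal.aleph 1 := by
    rw [hsucc] at hlt
    exact Order.lt_succ_iff.mp hlt
  have hge : Cardinal.aleph 1 ≤ (2 : Cardinal.{0}) ^ (Cardinal.aleph0 : Cardinal.{0}) := by
    rw [Cardinal.two_power_aleph0]
    exact Cardinal.aleph_one_le_continuum
  exact le_antisymm hle hge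

end
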